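/- Define f(ℓ) = 2^(2ℓ-1)·(2ℓ-1) / C(2ℓ, ℓ) for positive integers ℓ. Then for every integer ℓ ≥ 2, the sum over i from 1 to ℓ-1 of f(ℓ)/(f(i)·f(ℓ-i)) equals 4. -/

import Mathlib

/-- f(ℓ) = 2^(2ℓ-1)·(2ℓ-1) / C(2ℓ, ℓ) -/
noncomputable def f (ℓ : ℕ) : ℝ :=
  (2 : ℝ) ^ (2 * ℓ - 1) * ((2 * ℓ - 1 : ℕ) : ℝ) / ((Nat.choose (2 * ℓ) ℓ : ℕ) : ℝ)

lemma centralBinom_succ_eq_catalan (m : ℕ) :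
    Nat.centralBinom (m + 1) = 2 * (2 * m + 1) * catalan m := by
  have h1 := Nat.succ_mul_centralBinom_succ m
  have h2 := succ_mul_catalan_eq_centralBinom m
  have h3 : (m + 1) * Nat.centralBinom (m + 1) = (m + 1) * (2 * (2 * m + 1) * catalan m) := by
    rw [h1, ← h2]; ring
  exact Nat.eq_of_mul_eq_mul_left (Nat.succ_pos m) h3

lemma catalan_ne_zero (m : ℕ) : catalan m ≠ 0 := by
  have h := succ_mul_catalan_eq_centralBinom m
  have hp := Nat.centralBinom_pos m
  intro h0
  rw [h0, mul_zero] at h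
  omega

lemma catalan_cast_ne (m : ℕ) : (catalan m : ℝ) ≠ 0 :=
  Nat.cast_ne_zero.mpr (catalan_ne_zero m)

lemma f_succ (m : ℕ) : f (m + 1) = 4 ^ m / (catalan m : ℝ) := by
  unfold f
  have h1 : 2 * (m + 1) - 1 = 2 * m + 1 := by omega
  have h2 : Nat.choose (2 * (m + 1)) (m + 1) = 2 * (2 * m + 1) * catalan m := by
    rw [show Nat.choose (2 * (m+1)) (m+1) = Nat.centralBinom (m+1) from rfl]
    exact centralBinom_succ_eq_catalan m
  rw [h1, h2]
  have h4 : (2 : ℝ) ^ (2 * m + 1) = 2 * 4 ^ m := by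
    rw [pow_succ, pow_mul]; norm_num; ring
  push_cast
  rw [h4]
  have hc := catalan_cast_ne m
  have hm : (2 * (m : ℝ) + 1) ≠ 0 := by positivity
  field_simp

theorem stmt_1 : ∀ ℓ : ℕ, 2 ≤ ℓ →
    ∑ i ∈ Finset.Ico 1 ℓ, f ℓ / (f i * f (ℓ - i)) = 4 := by
  intro ℓ hℓ
  obtain ⟨n, rfl⟩ : ∃ n, ℓ = n + 2 := ⟨ℓ - 2, by omega⟩
  rw [Finset.sum_Ico_eq_sum_range]
  have hrange : n + 2 - 1 = n + 1 := by omega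
  rw [hrange]
  have hterm : ∀ k ∈ Finset.range (n + 1),
      f (n + 2) / (f (1 + k) * f (n + 2 - (1 + k)))
        = 4 * ((catalan k : ℝ) * (catalan (n - k) : ℝ)) / (catalan (n + 1) : ℝ) := by
    intro k hk
    have hk' : k ≤ n := by
      have := Finset.mem_range.mp hk; omega
    have e1 : 1 + k = k + 1 := by omega
    have e2 : n + 2 - (k + 1) = (n - k) + 1 := by omega
    have e3 : n + 2 = (n + 1) + 1 := by omega
    rw [e1, e2, e3, f_succ, f_succ, f_succ]
    have h4 : (4 : ℝ) ^ (n + 1) = 4 * (4 ^ k * 4 ^ (n - k)) := by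
      rw [← pow_add, show k + (n - k) = n from by omega, pow_succ]; ring
    rw [h4]
    have c1 := catalan_cast_ne k
    have c2 := catalan_cast_ne (n - k)
    have c3 := catalan_cast_ne (n + 1)
    have p1 : (4 : ℝ) ^ k ≠ 0 := by positivity
    have p2 : (4 : ℝ) ^ (n - k) ≠ 0 := by positivity
    field_simp
  rw [Finset.sum_congr rfl hterm, ← Finset.sum_div, ← Finset.mul_sum]
  have hcat : ((catalan (n + 1) : ℕ) : ℝ)
      = ∑ k ∈ Finset.range (n + 1), (catalan k : ℝ) * (catalan (n - k) : ℝ) := by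
    rw [catalan_succ, Fin.sum_univ_eq_sum_range (fun i => catalan i * catalan (n - i))]
    push_cast
    rfl
  rw [← hcat, mul_div_assoc, div_self (catalan_cast_ne (n + 1)), mul_one]
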